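/- arXiv:2208.03860 — 2 statements merged into one kernel-verified Lean document; each statement's English description precedes it below -/
import Mathlib

section
/- The support of the Slater spectrum is the interval [Ŝ, T - Ŝ]: a_{Ŝ} ≥ 1, a_{T-Ŝ} ≥ 1, and for every t with 0 ≤ t ≤ T, if t < Ŝ or t > T - Ŝ then a_t = 0. -/
/-- The inconsistency index `S(ρ) = ∑_{i<j} w (ρ j) (ρ i)`. -/
def inconsistency {M : ℕ} (w : Fin M → Fin M → ℕ) (ρ : Equiv.Perm (Fin M)) : ℕ :=
  ∑ i : Fin M, ∑ j ∈ Finset.Ioi i, w (ρ j) (ρ i)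

/-- The total number of comparisons `T = ∑_{m,n} w m n`. -/
def totalComparisons {M : ℕ} (w : Fin M → Fin M → ℕ) : ℕ :=
  ∑ m : Fin M, ∑ n : Fin M, w m n

/-- The Slater spectrum `a_t = card {ρ : S(ρ) = t}`. -/
def slaterSpectrum {M : ℕ} (w : Fin M → Fin M → ℕ) (t : ℕ) : ℕ :=
  (Finset.univ.filter fun ρ : Equiv.Perm (Fin M) => inconsistency w ρ = t).card

lemma incons_eq_ite {M : ℕ} (w : Fin M → Fin M → ℕ) (ρ : Equiv.Perm (Fin M)) :
    inconsistency w ρ = ∑ i : Fin M, ∑ j : Fin M, if i < j then w (ρ j) (ρ i) else 0 := by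
  unfold inconsistency
  refine Finset.sum_congr rfl fun i _ => ?_
  rw [← Finset.filter_lt_eq_Ioi, Finset.sum_filter]

lemma rev_incons {M : ℕ} (w : Fin M → Fin M → ℕ) (ρ : Equiv.Perm (Fin M)) :
    inconsistency w (ρ * Fin.revPerm) =
      ∑ i : Fin M, ∑ j : Fin M, if j < i then w (ρ j) (ρ i) else 0 := by
  rw [incons_eq_ite]
  refine Fintype.sum_equiv Fin.revPerm _ _ (fun i => ?_)
  refine Fintype.sum_equiv Fin.revPerm _ _ (fun j => ?_)
  have h : i < j ↔ Fin.revPerm j < Fin.revPerm i := by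
    simp [Fin.revPerm, Fin.rev_lt_rev]
  simp only [Equiv.Perm.mul_apply, h]

lemma incons_add_rev {M : ℕ} (w : Fin M → Fin M → ℕ) (hw : ∀ m, w m m = 0)
    (ρ : Equiv.Perm (Fin M)) :
    inconsistency w ρ + inconsistency w (ρ * Fin.revPerm) = totalComparisons w := by
  rw [incons_eq_ite, rev_incons, ← Finset.sum_add_distrib]
  have hT : totalComparisons w = ∑ i : Fin M, ∑ j : Fin M, w (ρ j) (ρ i) := by
    unfold totalComparisons
    rw [Finset.sum_comm]
    exact (Fintype.sum_equiv ρ (fun i => ∑ j : Fin M, w (ρ j) (ρ i))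
      (fun n => ∑ m : Fin M, w m n)
      fun i => Fintype.sum_equiv ρ (fun j => w (ρ j) (ρ i)) (fun m => w m (ρ i))
        fun j => rfl).symm
  rw [hT]
  refine Finset.sum_congr rfl fun i _ => ?_
  rw [← Finset.sum_add_distrib]
  refine Finset.sum_congr rfl fun j _ => ?_
  rcases lt_trichotomy i j with h | h | h
  · simp [h, not_lt.mpr h.le]
  · subst h; simp [hw]
  · simp [h, not_lt.mpr h.le]

/-- The support of the Slater spectrum is the interval `[Ŝ, T - Ŝ]`, where `Ŝ` is the
Slater index (the minimum of `S` over all permutations): `a_Ŝ ≥ 1`, `a_{T-Ŝ} ≥ 1`,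
and for every `t ≤ T`, if `t < Ŝ` or `t > T - Ŝ` then `a_t = 0`. -/
theorem slaterSpectrum_support
    (M : ℕ) (w : Fin M → Fin M → ℕ) (hw : ∀ m, w m m = 0)
    (Shat : ℕ) (hShat : IsLeast (Set.range (inconsistency w)) Shat) :
    1 ≤ slaterSpectrum w Shat ∧
      1 ≤ slaterSpectrum w (totalComparisons w - Shat) ∧
      ∀ t ≤ totalComparisons w,
        (t < Shat ∨ totalComparisons w - Shat < t) → slaterSpectrum w t = 0 := by
  obtain ⟨⟨ρ₀, hρ₀⟩, hlb⟩ := hShat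
  have hmin : ∀ ρ : Equiv.Perm (Fin M), Shat ≤ inconsistency w ρ :=
    fun ρ => hlb ⟨ρ, rfl⟩
  have hmax : ∀ ρ : Equiv.Perm (Fin M),
      inconsistency w ρ ≤ totalComparisons w - Shat := fun ρ => by
    have h1 := incons_add_rev w hw ρ
    have h2 := hmin (ρ * Fin.revPerm)
    omega
  refine ⟨?_, ?_, ?_⟩
  · rw [slaterSpectrum, Nat.one_le_iff_ne_zero, ← Nat.pos_iff_ne_zero, Finset.card_pos]
    exact ⟨ρ₀, by simp [hρ₀]⟩
  · rw [slaterSpectrum, Nat.one_le_iff_ne_zero, ← Nat.pos_iff_ne_zero, Finset.card_pos]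
    refine ⟨ρ₀ * Fin.revPerm, ?_⟩
    have h1 := incons_add_rev w hw ρ₀
    have h2 := hmin (ρ₀ * Fin.revPerm)
    have h3 := hmax (ρ₀ * Fin.revPerm)
    simp only [Finset.mem_filter, Finset.mem_univ, true_and]
    omega
  · intro t ht hcases
    rw [slaterSpectrum, Finset.card_eq_zero, Finset.filter_eq_empty_iff]
    intro ρ _ hρ
    have h1 := hmin ρ
    have h2 := hmax ρ
    omega
end

section
/- Recursion for the maximal consistency index (the degree of the spectrum polynomial): let s be a nonempty finite subset of Fin M, let Ord(s) denote the set of duplicate-free lists whose set of elements equals s, and define q(s) = max_{l ∈ Ord(s)} C(l). Then q(s) = max_{e ∈ s} ( d_e(s) + q(s \ {e}) ), where d_e(s) = ∑_{n ∈ s \ {e}} w e n and q(∅) = 0. -/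
/-- The consistency index of a list `l = [l_0, …, l_{k-1}]`:
`C(l) = ∑_{0 ≤ i < j < k} w (l_i) (l_j)`. -/
def listConsistency {M : ℕ} (w : Fin M → Fin M → ℕ) (l : List (Fin M)) : ℕ :=
  ∑ i : Fin l.length, ∑ j : Fin l.length,
    if (i : ℕ) < (j : ℕ) then w (l.get i) (l.get j) else 0

/-- `OrdSet s`: the set of duplicate-free lists of elements of `Fin M` whose set of
elements equals the finset `s`. -/
def OrdSet {M : ℕ} (s : Finset (Fin M)) : Set (List (Fin M)) :=
  {l : List (Fin M) | l.Nodup ∧ l.toFinset = s}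

/-- `q s`: the maximal consistency index over all orders of the elements of `s`
(for `s = ∅` this is `0`, since `OrdSet ∅ = {[]}`). -/
noncomputable def maxConsistency {M : ℕ} (w : Fin M → Fin M → ℕ)
    (s : Finset (Fin M)) : ℕ :=
  sSup (listConsistency w '' OrdSet s)

lemma ordSet_finite {M : ℕ} (s : Finset (Fin M)) : (OrdSet s).Finite := by
  apply (List.finite_length_le (Fin M) M).subset
  intro l hl
  have : l.Nodup := hl.1
  simpa using this.length_le_card

lemma ordSet_nonempty {M : ℕ} (s : Finset (Fin M)) : (OrdSet s).Nonempty :=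
  ⟨s.toList, s.nodup_toList, s.toList_toFinset⟩

lemma le_maxConsistency {M : ℕ} (w : Fin M → Fin M → ℕ) {s : Finset (Fin M)}
    {l : List (Fin M)} (hl : l ∈ OrdSet s) :
    listConsistency w l ≤ maxConsistency w s :=
  le_csSup (((ordSet_finite s).image _).bddAbove) ⟨l, hl, rfl⟩

lemma exists_maxConsistency {M : ℕ} (w : Fin M → Fin M → ℕ) (s : Finset (Fin M)) :
    ∃ l ∈ OrdSet s, listConsistency w l = maxConsistency w s := by
  have := Nat.sSup_mem ((ordSet_nonempty s).image (listConsistency w))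
    (((ordSet_finite s).image (listConsistency w)).bddAbove)
  obtain ⟨l, hl, h⟩ := this
  exact ⟨l, hl, h⟩

lemma listConsistency_cons {M : ℕ} (w : Fin M → Fin M → ℕ) (e : Fin M)
    (t : List (Fin M)) :
    listConsistency w (e :: t) = (t.map (w e)).sum + listConsistency w t := by
  unfold listConsistency
  simp only [List.length_cons]
  rw [Fin.sum_univ_succ]
  congr 1
  · rw [Fin.sum_univ_succ]
    simp [List.get]
  · rw [Finset.sum_congr rfl]
    intro i _
    rw [Fin.sum_univ_succ]
    simp

/-- Recursion for the maximal consistency index (the degree of the spectrum polynomial):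
for a nonempty finset `s`, `q(s) = max_{e ∈ s} (d_e(s) + q(s \ {e}))`, where
`d_e(s) = ∑_{n ∈ s \ {e}} w e n`. -/
theorem maxConsistency_recursion
    (M : ℕ) (w : Fin M → Fin M → ℕ) (hw : ∀ m, w m m = 0)
    (s : Finset (Fin M)) (hs : s.Nonempty) :
    maxConsistency w s =
      s.sup' hs (fun e => (∑ n ∈ s.erase e, w e n) + maxConsistency w (s.erase e)) := by
  apply le_antisymm
  · obtain ⟨l, ⟨hnd, hts⟩, hC⟩ := exists_maxConsistency w s
    rw [← hC]
    match l, hnd, hts with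
    | [], _, hts => simp at hts; exact absurd hts.symm hs.ne_empty
    | e :: t, hnd, hts =>
      have hes : e ∈ s := by rw [← hts]; simp
      have het : e ∉ t := by simp [List.nodup_cons] at hnd; exact hnd.1
      have hnt : t.Nodup := (List.nodup_cons.mp hnd).2
      have hterase : t.toFinset = s.erase e := by
        rw [← hts, List.toFinset_cons,
          Finset.erase_insert (show e ∉ t.toFinset by simpa using het)]
      have hmem : t ∈ OrdSet (s.erase e) := ⟨hnt, hterase⟩
      rw [listConsistency_cons]
      refine le_trans ?_ (Finset.le_sup' _ hes)
      have hsum : (t.map (w e)).sum = ∑ n ∈ s.erase e, w e n := by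
        rw [← hterase, List.sum_toFinset _ hnt]
      rw [hsum]
      exact Nat.add_le_add_left (le_maxConsistency w hmem) _
  · apply Finset.sup'_le
    intro e he
    obtain ⟨t, ⟨hnt, hterase⟩, hC⟩ := exists_maxConsistency w (s.erase e)
    have het : e ∉ t := by
      intro h
      have : e ∈ s.erase e := hterase ▸ List.mem_toFinset.mpr h
      simp at this
    have hmem : (e :: t) ∈ OrdSet s := by
      refine ⟨List.nodup_cons.mpr ⟨het, hnt⟩, ?_⟩
      rw [List.toFinset_cons, hterase, Finset.insert_erase he]
    have := le_maxConsistency w hmem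
    rw [listConsistency_cons] at this
    have hsum : (t.map (w e)).sum = ∑ n ∈ s.erase e, w e n := by
      rw [← hterase, List.sum_toFinset _ hnt]
    rw [hsum, hC] at this
    exact this
end
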